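/- Let 1/2 < H < 1 and let ρ be a real number with -1 < ρ < 2(H-1). Then for every k ∈ ℤ²₀ the series ∑_{h ∈ ℤ²₀, h ≠ k} |h|^{2ρ+2}/(|h|^{4H} |k-h|^{4H}) converges, and there exists a constant C > 0 (depending only on H and ρ) such that its sum S₂(k) satisfies S₂(k) ≤ C / |k|^{4H-2ρ-2} for all k ∈ ℤ²₀. -/

import Mathlib

set_option maxHeartbeats 1000000

/-- Euclidean norm of an element of `ℤ²`. -/
noncomputable def znorm (k : ℤ × ℤ) : ℝ :=
  Real.sqrt ((k.1 : ℝ) ^ 2 + (k.2 : ℝ) ^ 2)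

lemma znorm_nonneg (h : ℤ × ℤ) : 0 ≤ znorm h := Real.sqrt_nonneg _

lemma one_le_znorm {h : ℤ × ℤ} (hh : h ≠ 0) : 1 ≤ znorm h := by
  have h' : h.1 ≠ 0 ∨ h.2 ≠ 0 := by
    by_contra hc; push_neg at hc; exact hh (Prod.ext hc.1 hc.2)
  have h1 : (1:ℝ) ≤ (h.1:ℝ)^2 + (h.2:ℝ)^2 := by
    rcases h' with h' | h'
    · have h1r : (1:ℝ) ≤ |(h.1:ℝ)| := by
        have := Int.one_le_abs h'
        rw [← Int.cast_abs]; exact_mod_cast this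
      nlinarith [sq_nonneg ((h.2:ℝ)), sq_abs ((h.1:ℝ))]
    · have h1r : (1:ℝ) ≤ |(h.2:ℝ)| := by
        have := Int.one_le_abs h'
        rw [← Int.cast_abs]; exact_mod_cast this
      nlinarith [sq_nonneg ((h.1:ℝ)), sq_abs ((h.2:ℝ))]
  calc (1:ℝ) = Real.sqrt 1 := (Real.sqrt_one).symm
  _ ≤ znorm h := Real.sqrt_le_sqrt h1

lemma znorm_triangle (k h : ℤ × ℤ) : znorm k ≤ znorm h + znorm (k - h) := by
  have key : ∀ p : ℤ × ℤ, znorm p = ‖(⟨(p.1:ℝ), (p.2:ℝ)⟩ : ℂ)‖ := by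
    intro p
    rw [Complex.norm_def, Complex.normSq_mk, znorm]
    ring_nf
  rw [key, key, key]
  have : (⟨(k.1:ℝ), (k.2:ℝ)⟩ : ℂ) = ⟨(h.1:ℝ), (h.2:ℝ)⟩ + ⟨((k-h).1:ℝ), ((k-h).2:ℝ)⟩ := by
    simp [Complex.ext_iff, Prod.fst_sub, Prod.snd_sub]
  rw [this]
  exact norm_add_le _ _

lemma summable_znorm_rpow {a : ℝ} (ha : 2 < a) :
    Summable (fun h : ℤ × ℤ => znorm h ^ (-a)) := by
  have h0 := EisensteinSeries.summable_one_div_norm_rpow ha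
  rw [← (finTwoArrowEquiv ℤ).summable_iff]
  refine h0.of_nonneg_of_le (fun x => Real.rpow_nonneg (znorm_nonneg _) _) (fun x => ?_)
  rcases eq_or_ne x 0 with rfl | hx
  · simp [znorm, Real.zero_rpow (by linarith : -a ≠ 0)]
  · refine Real.rpow_le_rpow_of_nonpos (norm_pos_iff.mpr hx) ?_ (by linarith)
    rw [pi_norm_le_iff_of_nonneg (znorm_nonneg _)]
    intro i
    rw [Int.norm_eq_abs, ← Real.sqrt_sq_eq_abs]
    apply Real.sqrt_le_sqrt
    simp only [finTwoArrowEquiv, Function.comp]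
    fin_cases i <;> simp <;> nlinarith [sq_nonneg ((x 0 : ℝ)), sq_nonneg ((x 1 : ℝ))]

lemma aux_min_max {a x y z : ℝ} (ha : 0 ≤ a) (hx : 1 ≤ x) (hy : 1 ≤ y) (hz : 0 < z)
    (htri : z ≤ x + y) :
    x ^ (-a) * y ^ (-a) ≤ 2 ^ a * z ^ (-a) * (x ^ (-a) + y ^ (-a)) := by
  have hx0 : (0:ℝ) < x := lt_of_lt_of_le one_pos hx
  have hy0 : (0:ℝ) < y := lt_of_lt_of_le one_pos hy
  have hdiv : (z/2) ^ (-a) = 2 ^ a * z ^ (-a) := by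
    rw [Real.div_rpow hz.le (by norm_num), Real.rpow_neg hz.le,
      Real.rpow_neg (by norm_num : (0:ℝ) ≤ 2)]
    have h2 : (2:ℝ) ^ a ≠ 0 := by positivity
    have hza : z ^ a ≠ 0 := by positivity
    field_simp
  rcases le_total x y with hxy | hxy
  · have hyz : z / 2 ≤ y := by linarith
    have h1 : y ^ (-a) ≤ 2 ^ a * z ^ (-a) := by
      rw [← hdiv]; exact Real.rpow_le_rpow_of_nonpos (by linarith) hyz (by linarith)
    calc x ^ (-a) * y ^ (-a) ≤ x ^ (-a) * (2 ^ a * z ^ (-a)) :=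
          mul_le_mul_of_nonneg_left h1 (Real.rpow_nonneg hx0.le _)
    _ = 2 ^ a * z ^ (-a) * x ^ (-a) := by ring
    _ ≤ 2 ^ a * z ^ (-a) * (x ^ (-a) + y ^ (-a)) := by
        apply mul_le_mul_of_nonneg_left _ (by positivity)
        nlinarith [Real.rpow_nonneg hy0.le (-a)]
  · have hxz : z / 2 ≤ x := by linarith
    have h1 : x ^ (-a) ≤ 2 ^ a * z ^ (-a) := by
      rw [← hdiv]; exact Real.rpow_le_rpow_of_nonpos (by linarith) hxz (by linarith)
    calc x ^ (-a) * y ^ (-a) ≤ (2 ^ a * z ^ (-a)) * y ^ (-a) :=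
          mul_le_mul_of_nonneg_right h1 (Real.rpow_nonneg hy0.le _)
    _ ≤ 2 ^ a * z ^ (-a) * (x ^ (-a) + y ^ (-a)) := by
        apply mul_le_mul_of_nonneg_left _ (by positivity)
        nlinarith [Real.rpow_nonneg hx0.le (-a)]

theorem statement_5 (H ρ : ℝ) (hH1 : 1 / 2 < H) (hH2 : H < 1)
    (hρ1 : -1 < ρ) (hρ2 : ρ < 2 * (H - 1)) :
    (∀ k : ℤ × ℤ, k ≠ 0 →
      Summable (fun h : {h : ℤ × ℤ // h ≠ 0 ∧ h ≠ k} =>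
        znorm h.1 ^ (2 * ρ + 2) / (znorm h.1 ^ (4 * H) * znorm (k - h.1) ^ (4 * H)))) ∧
    ∃ C : ℝ, 0 < C ∧ ∀ k : ℤ × ℤ, k ≠ 0 →
      (∑' h : {h : ℤ × ℤ // h ≠ 0 ∧ h ≠ k},
          znorm h.1 ^ (2 * ρ + 2) / (znorm h.1 ^ (4 * H) * znorm (k - h.1) ^ (4 * H)))
        ≤ C / znorm k ^ (4 * H - 2 * ρ - 2) := by
  set a : ℝ := 4 * H - 2 * ρ - 2 with ha_def
  have ha2 : 2 < a := by simp only [ha_def]; linarith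
  have ha0 : 0 ≤ a := by linarith
  -- pointwise bound
  have key : ∀ k : ℤ × ℤ, k ≠ 0 → ∀ h : ℤ × ℤ, h ≠ 0 → h ≠ k →
      znorm h ^ (2 * ρ + 2) / (znorm h ^ (4 * H) * znorm (k - h) ^ (4 * H))
        ≤ 2 ^ a * znorm k ^ (-a) * (znorm h ^ (-a) + znorm (k - h) ^ (-a)) := by
    intro k hk h hh hhk
    have hx : 1 ≤ znorm h := one_le_znorm hh
    have hy : 1 ≤ znorm (k - h) := one_le_znorm (sub_ne_zero.mpr (Ne.symm hhk))
    have hz : 0 < znorm k := lt_of_lt_of_le one_pos (one_le_znorm hk)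
    have hx0 : (0:ℝ) < znorm h := lt_of_lt_of_le one_pos hx
    have hy0 : (0:ℝ) < znorm (k - h) := lt_of_lt_of_le one_pos hy
    have step1 : znorm h ^ (2 * ρ + 2) / (znorm h ^ (4 * H) * znorm (k - h) ^ (4 * H))
        ≤ znorm h ^ (-a) * znorm (k - h) ^ (-a) := by
      rw [div_le_iff₀ (by positivity)]
      have expand : znorm h ^ (-a) * znorm (k - h) ^ (-a) *
          (znorm h ^ (4 * H) * znorm (k - h) ^ (4 * H))
          = znorm h ^ (2 * ρ + 2) * znorm (k - h) ^ (2 * ρ + 2) := by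
        rw [show (2 * ρ + 2) = -a + 4 * H by simp only [ha_def]; ring]
        rw [Real.rpow_add hx0, Real.rpow_add hy0]
        ring
      rw [expand]
      exact le_mul_of_one_le_right (Real.rpow_nonneg hx0.le _)
        (Real.one_le_rpow hy (by linarith))
    refine step1.trans ?_
    exact aux_min_max ha0 hx hy hz (znorm_triangle k h)
  -- base summability facts
  have S0 : Summable (fun h : ℤ × ℤ => znorm h ^ (-a)) := summable_znorm_rpow ha2
  have Sshift : ∀ k : ℤ × ℤ, Summable (fun h : ℤ × ℤ => znorm (k - h) ^ (-a)) := by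
    intro k
    have := (Equiv.subLeft k).summable_iff (f := fun h : ℤ × ℤ => znorm h ^ (-a))
    exact this.mpr S0
  have Gsum : ∀ k : ℤ × ℤ, Summable (fun h : ℤ × ℤ =>
      2 ^ a * znorm k ^ (-a) * (znorm h ^ (-a) + znorm (k - h) ^ (-a))) :=
    fun k => (S0.add (Sshift k)).mul_left _
  have fnonneg : ∀ (k h : ℤ × ℤ),
      0 ≤ znorm h ^ (2 * ρ + 2) / (znorm h ^ (4 * H) * znorm (k - h) ^ (4 * H)) := by
    intro k h
    apply div_nonneg (Real.rpow_nonneg (znorm_nonneg _) _)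
    exact mul_nonneg (Real.rpow_nonneg (znorm_nonneg _) _) (Real.rpow_nonneg (znorm_nonneg _) _)
  have main_summable : ∀ k : ℤ × ℤ, k ≠ 0 →
      Summable (fun h : {h : ℤ × ℤ // h ≠ 0 ∧ h ≠ k} =>
        znorm h.1 ^ (2 * ρ + 2) / (znorm h.1 ^ (4 * H) * znorm (k - h.1) ^ (4 * H))) := by
    intro k hk
    refine Summable.of_nonneg_of_le (fun h => fnonneg k h.1) (fun h => key k hk h.1 h.2.1 h.2.2) ?_
    exact (Gsum k).subtype _
  refine ⟨main_summable, ?_⟩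
  set S : ℝ := ∑' h : ℤ × ℤ, znorm h ^ (-a) with hS_def
  have hS0 : 0 ≤ S := tsum_nonneg (fun h => Real.rpow_nonneg (znorm_nonneg _) _)
  refine ⟨2 ^ a * 2 * S + 1, by positivity, ?_⟩
  intro k hk
  have hz : 0 < znorm k := lt_of_lt_of_le one_pos (one_le_znorm hk)
  have step2 : (∑' h : {h : ℤ × ℤ // h ≠ 0 ∧ h ≠ k},
      znorm h.1 ^ (2 * ρ + 2) / (znorm h.1 ^ (4 * H) * znorm (k - h.1) ^ (4 * H)))
      ≤ ∑' h : {h : ℤ × ℤ // h ≠ 0 ∧ h ≠ k},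
        2 ^ a * znorm k ^ (-a) * (znorm h.1 ^ (-a) + znorm (k - h.1) ^ (-a)) :=
    Summable.tsum_le_tsum (fun h => key k hk h.1 h.2.1 h.2.2) (main_summable k hk)
      ((Gsum k).subtype _)
  have step3 : (∑' h : {h : ℤ × ℤ // h ≠ 0 ∧ h ≠ k},
        2 ^ a * znorm k ^ (-a) * (znorm h.1 ^ (-a) + znorm (k - h.1) ^ (-a)))
      ≤ ∑' h : ℤ × ℤ, 2 ^ a * znorm k ^ (-a) * (znorm h ^ (-a) + znorm (k - h) ^ (-a)) := by
    exact Summable.tsum_subtype_le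
      (fun h : ℤ × ℤ => 2 ^ a * znorm k ^ (-a) * (znorm h ^ (-a) + znorm (k - h) ^ (-a)))
      {h : ℤ × ℤ | h ≠ 0 ∧ h ≠ k}
      (fun h => mul_nonneg (mul_nonneg (Real.rpow_nonneg (by norm_num) _)
        (Real.rpow_nonneg (znorm_nonneg _) _))
        (add_nonneg (Real.rpow_nonneg (znorm_nonneg _) _)
          (Real.rpow_nonneg (znorm_nonneg _) _))) (Gsum k)
  have step4 : (∑' h : ℤ × ℤ, 2 ^ a * znorm k ^ (-a) * (znorm h ^ (-a) + znorm (k - h) ^ (-a)))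
      = 2 ^ a * znorm k ^ (-a) * (2 * S) := by
    rw [tsum_mul_left, Summable.tsum_add S0 (Sshift k)]
    have : (∑' h : ℤ × ℤ, znorm (k - h) ^ (-a)) = S := by
      rw [hS_def]
      exact (Equiv.subLeft k).tsum_eq (fun h : ℤ × ℤ => znorm h ^ (-a))
    rw [this, ← hS_def]
    ring
  have final : 2 ^ a * znorm k ^ (-a) * (2 * S) ≤ (2 ^ a * 2 * S + 1) / znorm k ^ a := by
    rw [Real.rpow_neg hz.le, div_eq_mul_inv]
    have h1 : (znorm k ^ a)⁻¹ ≥ 0 := by positivity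
    nlinarith [Real.rpow_nonneg hz.le a, h1]
  calc _ ≤ _ := step2
  _ ≤ _ := step3
  _ = _ := step4
  _ ≤ (2 ^ a * 2 * S + 1) / znorm k ^ a := final
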